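/- (Severi's example) Let A = {(x₁,x₂) ∈ ℝ² : |x₂| ≤ x₁²} and f : A → ℝ the zero function. Then every linear functional L : ℝ² → ℝ with L(e₁) = 0 is a total differential of f at (0,0), but the only total strict differential of f at (0,0) is L = 0. -/

import Mathlib

open Filter Metric Topology

lemma key (L : (ℝ × ℝ) →ₗ[ℝ] ℝ) (p : ℝ × ℝ) :
    L p = p.1 * L (1, 0) + p.2 * L (0, 1) := by
  have hp : p = p.1 • ((1:ℝ), (0:ℝ)) + p.2 • ((0:ℝ), (1:ℝ)) := by
    ext <;> simp
  conv_lhs => rw [hp]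
  rw [map_add, map_smul, map_smul, smul_eq_mul, smul_eq_mul]

theorem severi_example :
    let A : Set (ℝ × ℝ) := {p | |p.2| ≤ p.1 ^ 2}
    let f : ℝ × ℝ → ℝ := fun _ => 0
    (∀ L : (ℝ × ℝ) →ₗ[ℝ] ℝ, L (1, 0) = 0 →
      Filter.Tendsto (fun y : ℝ × ℝ => ‖y - (0, 0)‖⁻¹ * (f y - f (0, 0) - L (y - (0, 0))))
        (𝓝[A \ {(0, 0)}] (0, 0)) (𝓝 0)) ∧
    (∀ L : (ℝ × ℝ) →ₗ[ℝ] ℝ,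
      Filter.Tendsto (fun p : (ℝ × ℝ) × (ℝ × ℝ) =>
          ‖p.1 - p.2‖⁻¹ * (f p.1 - f p.2 - L (p.1 - p.2)))
        (𝓝[(A ×ˢ A) ∩ {p | p.1 ≠ p.2}] ((0, 0), (0, 0))) (𝓝 0) → L = 0) := by
  intro A f
  constructor
  · intro L hL
    set c := L (0, 1) with hc
    refine squeeze_zero_norm' (a := fun y : ℝ × ℝ => |c| * ‖y‖) ?_ ?_
    · filter_upwards [self_mem_nhdsWithin] with y hy
      obtain ⟨hyA, hy0⟩ := hy
      have hy0' : y ≠ 0 := by simpa [Prod.ext_iff] using hy0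
      have hnorm : (0:ℝ) < ‖y‖ := norm_pos_iff.mpr hy0'
      have h1 : |y.1| ≤ ‖y‖ := by
        have := norm_fst_le y
        simpa [Real.norm_eq_abs] using this
      have hA : |y.2| ≤ y.1 ^ 2 := hyA
      have hLy : |L y| ≤ |c| * ‖y‖ ^ 2 := by
        rw [key L y, hL, mul_zero, zero_add, abs_mul]
        calc |y.2| * |c| ≤ y.1 ^ 2 * |c| := by gcongr
          _ ≤ ‖y‖ ^ 2 * |c| := by
              have hsq : y.1 ^ 2 ≤ ‖y‖ ^ 2 := by
                rw [← sq_abs y.1]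
                gcongr
              exact mul_le_mul_of_nonneg_right hsq (abs_nonneg c)
          _ = |c| * ‖y‖ ^ 2 := mul_comm _ _
      have hsub : y - ((0:ℝ), (0:ℝ)) = y := by ext <;> simp
      simp only [f, hsub, sub_zero, zero_sub]
      calc ‖‖y‖⁻¹ * (-(L y))‖ = ‖y‖⁻¹ * |L y| := by
            rw [Real.norm_eq_abs, abs_mul, abs_neg, abs_inv, abs_norm]
        _ ≤ ‖y‖⁻¹ * (|c| * ‖y‖ ^ 2) := by gcongr
        _ = |c| * ‖y‖ := by field_simp
    · have h0 : Tendsto (fun y : ℝ × ℝ => |c| * ‖y‖) (𝓝 ((0:ℝ), (0:ℝ))) (𝓝 0) := by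
        have : Tendsto (fun y : ℝ × ℝ => ‖y‖) (𝓝 ((0:ℝ), (0:ℝ))) (𝓝 0) := by
          have := continuous_norm.tendsto ((0:ℝ), (0:ℝ))
          simpa using this
        simpa using this.const_mul |c|
      exact h0.mono_left nhdsWithin_le_nhds
  · intro L hL
    set t : ℕ → ℝ := fun n => 1 / (n + 1) with ht_def
    have htpos : ∀ n, 0 < t n := fun n => by positivity
    have ht : Tendsto t atTop (𝓝 0) := tendsto_one_div_add_atTop_nhds_zero_nat
    -- first direction: L (1,0) = 0
    have h1 : L (1, 0) = 0 := by
      have hmem : ∀ n, ((t n, (0:ℝ)), ((0:ℝ), (0:ℝ))) ∈ (A ×ˢ A) ∩ {p | p.1 ≠ p.2} := by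
        intro n
        refine ⟨⟨?_, ?_⟩, ?_⟩
        · show |(0:ℝ)| ≤ (t n) ^ 2
          rw [abs_zero]; positivity
        · show |(0:ℝ)| ≤ (0:ℝ) ^ 2; simp
        · simp only [Set.mem_setOf_eq, ne_eq, Prod.mk.injEq, not_and]
          intro h; exact absurd h (ne_of_gt (htpos n))
      have hto : Tendsto (fun n => ((t n, (0:ℝ)), ((0:ℝ), (0:ℝ)))) atTop
          (𝓝[(A ×ˢ A) ∩ {p | p.1 ≠ p.2}] ((0, 0), (0, 0))) := by
        rw [tendsto_nhdsWithin_iff]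
        constructor
        · exact ((ht.prodMk_nhds tendsto_const_nhds).prodMk_nhds tendsto_const_nhds)
        · exact Eventually.of_forall hmem
      have hcomp := hL.comp hto
      have heq : ((fun p : (ℝ × ℝ) × (ℝ × ℝ) =>
          ‖p.1 - p.2‖⁻¹ * (f p.1 - f p.2 - L (p.1 - p.2))) ∘
          (fun n => ((t n, (0:ℝ)), ((0:ℝ), (0:ℝ)))))
          = fun _ => -L (1, 0) := by
        funext n
        have hd : ((t n, (0:ℝ)) : ℝ × ℝ) - ((0:ℝ), (0:ℝ)) = (t n, 0) := by ext <;> simp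
        have hn : ‖((t n, (0:ℝ)) : ℝ × ℝ)‖ = t n := by
          rw [Prod.norm_def]
          simp [Real.norm_eq_abs, abs_of_pos (htpos n), le_of_lt (htpos n)]
        simp only [Function.comp, f, hd, hn, key L (t n, 0), zero_sub, sub_zero]
        have : (t n)⁻¹ * -(t n * L (1, 0) + 0 * L (0, 1)) = -L (1, 0) := by
          field_simp
          rw [zero_mul, add_zero, mul_div_cancel_left₀ _ (htpos n).ne']
        simpa using this
      rw [heq] at hcomp
      have := tendsto_nhds_unique hcomp tendsto_const_nhds
      linarith [this]
    -- second direction: L (0,1) = 0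
    have h2 : L (0, 1) = 0 := by
      have hmem : ∀ n, ((t n, (t n)^2), (t n, -(t n)^2)) ∈ (A ×ˢ A) ∩ {p | p.1 ≠ p.2} := by
        intro n
        refine ⟨⟨?_, ?_⟩, ?_⟩
        · show |(t n)^2| ≤ (t n) ^ 2; simp [abs_of_pos (pow_pos (htpos n) 2)]
        · show |-(t n)^2| ≤ (t n) ^ 2; simp [abs_of_pos (pow_pos (htpos n) 2)]
        · simp only [Set.mem_setOf_eq, ne_eq, Prod.mk.injEq, not_and]
          intro _ h
          have := pow_pos (htpos n) 2
          nlinarith [h]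
      have hto : Tendsto (fun n => (((t n, (t n)^2) : ℝ × ℝ), ((t n, -(t n)^2) : ℝ × ℝ))) atTop
          (𝓝[(A ×ˢ A) ∩ {p | p.1 ≠ p.2}] ((0, 0), (0, 0))) := by
        rw [tendsto_nhdsWithin_iff]
        constructor
        · have ht2 : Tendsto (fun n => (t n)^2) atTop (𝓝 0) := by
            simpa using ht.pow 2
          have ht2' : Tendsto (fun n => -(t n)^2) atTop (𝓝 0) := by
            simpa using ht2.neg
          exact ((ht.prodMk_nhds ht2).prodMk_nhds (ht.prodMk_nhds ht2'))
        · exact Eventually.of_forall hmem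
      have hcomp := hL.comp hto
      have heq : ((fun p : (ℝ × ℝ) × (ℝ × ℝ) =>
          ‖p.1 - p.2‖⁻¹ * (f p.1 - f p.2 - L (p.1 - p.2))) ∘
          (fun n => (((t n, (t n)^2) : ℝ × ℝ), ((t n, -(t n)^2) : ℝ × ℝ))))
          = fun _ => -L (0, 1) := by
        funext n
        have h2pos : (0:ℝ) < 2 * (t n)^2 := by positivity
        have hd : ((t n, (t n)^2) : ℝ × ℝ) - (t n, -(t n)^2) = (0, 2 * (t n)^2) := by
          ext <;> simp <;> ring
        have hn : ‖((0:ℝ), 2 * (t n)^2)‖ = 2 * (t n)^2 := by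
          rw [Prod.norm_def]
          simp [Real.norm_eq_abs, abs_of_pos h2pos, le_of_lt h2pos, sq_nonneg (t n)]
        simp only [Function.comp, f, hd, hn, key L (0, 2 * (t n)^2), zero_sub, sub_zero]
        have : (2 * (t n)^2)⁻¹ * -(0 * L (1, 0) + 2 * (t n)^2 * L (0, 1)) = -L (0, 1) := by
          field_simp
          rw [zero_mul, zero_add, mul_assoc, mul_comm (t n ^ 2), ← mul_assoc, mul_div_assoc, div_self (pow_pos (htpos n) 2).ne', mul_one]
        simpa using this
      rw [heq] at hcomp
      have := tendsto_nhds_unique hcomp tendsto_const_nhds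
      linarith [this]
    apply LinearMap.ext
    intro p
    rw [key L p, h1, h2]
    simp
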